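/- Let F be a nonzero holomorphic function on a domain G and define v(z) = 1/|F(z)| if F(z) ≠ 0 and v(z) = 0 otherwise. Then H^∞_v(G) is a Banach space and equals {f ∈ H(G) : there exists C > 0 with |f(z)| ≤ C|F(z)| for all z ∈ G}. -/

import Mathlib

open Complex Metric Set Filter Topology MeasureTheory

noncomputable section

/-- `f` is holomorphic on `G` and `sup_{z in G} v z * |f z| < ∞`. -/
def MemHv (G : Set ℂ) (v : ℂ → ℝ) (f : ℂ → ℂ) : Prop :=
  DifferentiableOn ℂ f G ∧ ∃ C : ℝ, ∀ z ∈ G, v z * ‖f z‖ ≤ C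

/-- The weighted sup-seminorm `‖f‖_v`. -/
def HvNorm (G : Set ℂ) (v : ℂ → ℝ) (f : ℂ → ℂ) : ℝ :=
  sSup ((fun z => v z * ‖f z‖) '' G)

/-- A `‖·‖_v`-Cauchy sequence. -/
def HvCauchy (G : Set ℂ) (v : ℂ → ℝ) (F : ℕ → ℂ → ℂ) : Prop :=
  ∀ ε : ℝ, 0 < ε → ∃ N : ℕ, ∀ m ≥ N, ∀ n ≥ N, ∀ z ∈ G,
    v z * ‖F m z - F n z‖ ≤ ε

/-- Convergence in the `‖·‖_v`-seminorm. -/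
def HvTendsto (G : Set ℂ) (v : ℂ → ℝ) (F : ℕ → ℂ → ℂ) (f : ℂ → ℂ) : Prop :=
  ∀ ε : ℝ, 0 < ε → ∃ N : ℕ, ∀ n ≥ N, ∀ z ∈ G,
    v z * ‖F n z - f z‖ ≤ ε

/-- Completeness of `H^∞_v(G)`: every Cauchy sequence converges in the space. -/
def HvComplete (G : Set ℂ) (v : ℂ → ℝ) : Prop :=
  ∀ F : ℕ → ℂ → ℂ, (∀ n, MemHv G v (F n)) → HvCauchy G v F →
    ∃ f : ℂ → ℂ, MemHv G v f ∧ HvTendsto G v F f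

/-- The seminorm `‖·‖_v` is a norm: `‖f‖_v = 0` forces `f = 0` on `G`. -/
def HvNormed (G : Set ℂ) (v : ℂ → ℝ) : Prop :=
  ∀ f : ℂ → ℂ, MemHv G v f → (∀ z ∈ G, v z * ‖f z‖ = 0) →
    ∀ z ∈ G, f z = 0

/-- `H^∞_v(G)` is a Banach space. -/
def IsBanachHv (G : Set ℂ) (v : ℂ → ℝ) : Prop :=
  HvNormed G v ∧ HvComplete G v


/-- Key lemma: a bound `v z * |g z| ≤ ε` for a continuous `g` upgrades to
`|g z| ≤ ε * |F z|` on all of `G`, including zeros of `F`. -/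
lemma keyB (G : Set ℂ) (hG : IsOpen G) (hGc : IsConnected G)
    (F : ℂ → ℂ) (hF : DifferentiableOn ℂ F G) (hFne : ∃ z ∈ G, F z ≠ 0)
    (g : ℂ → ℂ) (hg : ContinuousOn g G) (ε : ℝ) (_hε : 0 ≤ ε)
    (h : ∀ z ∈ G, (if F z = 0 then 0 else (‖F z‖)⁻¹) * ‖g z‖ ≤ ε) :
    ∀ z ∈ G, ‖g z‖ ≤ ε * ‖F z‖ := by
  have hA : AnalyticOnNhd ℂ F G := hF.analyticOnNhd hG
  have key : ∀ w ∈ G, F w ≠ 0 → ‖g w‖ ≤ ε * ‖F w‖ := by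
    intro w hw hne
    have h1 := h w hw
    rw [if_neg hne] at h1
    have hpos : 0 < ‖F w‖ := norm_pos_iff.mpr hne
    rw [inv_mul_le_iff₀ hpos] at h1
    calc ‖g w‖ ≤ ‖F w‖ * ε := h1
    _ = ε * ‖F w‖ := mul_comm _ _
  intro z hz
  by_cases hz0 : F z = 0
  · rcases (hA z hz).eventually_eq_zero_or_eventually_ne_zero with hc | hne
    · obtain ⟨w, hw, hwne⟩ := hFne
      exact absurd (hA.eqOn_zero_of_preconnected_of_eventuallyEq_zero
        hGc.isPreconnected hz hc hw) hwne
    · have hGev : ∀ᶠ w in 𝓝[≠] z, w ∈ G :=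
        eventually_nhdsWithin_of_eventually_nhds (eventually_mem_nhds_iff.mpr ((hG.mem_nhds hz)) |>.mono fun w hw => mem_of_mem_nhds hw)
      have hev : ∀ᶠ w in 𝓝[≠] z, ‖g w‖ ≤ ε * ‖F w‖ := by
        filter_upwards [hne, hGev] with w hw1 hw2
        exact key w hw2 hw1
      have hgc : Tendsto (fun w => ‖g w‖) (𝓝[≠] z) (𝓝 (‖g z‖)) :=
        (continuous_norm.continuousAt.comp (hg.continuousAt (hG.mem_nhds hz))).mono_left
          nhdsWithin_le_nhds
      have hFc : Tendsto (fun w => ε * ‖F w‖) (𝓝[≠] z)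
          (𝓝 (ε * ‖F z‖)) :=
        ((continuous_const.mul continuous_norm).continuousAt.comp
          (hF.continuousOn.continuousAt (hG.mem_nhds hz))).mono_left nhdsWithin_le_nhds
      exact le_of_tendsto_of_tendsto hgc hFc hev
  · exact key z hz hz0

theorem stmt17 (G : Set ℂ) (hG : IsOpen G) (hGc : IsConnected G)
    (F : ℂ → ℂ) (hF : DifferentiableOn ℂ F G) (hFne : ∃ z ∈ G, F z ≠ 0) :
    IsBanachHv G (fun z => if F z = 0 then 0 else (‖F z‖)⁻¹) ∧
    ∀ f : ℂ → ℂ,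
      MemHv G (fun z => if F z = 0 then 0 else (‖F z‖)⁻¹) f ↔
        (DifferentiableOn ℂ f G ∧
          ∃ C > (0:ℝ), ∀ z ∈ G, ‖f z‖ ≤ C * ‖F z‖) := by
  set v : ℂ → ℝ := fun z => if F z = 0 then 0 else (‖F z‖)⁻¹ with hv
  have hv0 : ∀ z, 0 ≤ v z := by
    intro z; simp only [hv]; split <;> positivity
  refine ⟨⟨?_, ?_⟩, ?_⟩
  · -- HvNormed
    intro f hf hzero z hz
    have := keyB G hG hGc F hF hFne f hf.1.continuousOn 0 le_rfl
      (fun w hw => le_of_eq (hzero w hw)) z hz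
    exact norm_eq_zero.mp (le_antisymm (by simpa only [zero_mul] using this) (norm_nonneg _))
  · -- HvComplete
    intro Fs hmem hcau
    -- pointwise bound on differences
    have hdiffcont : ∀ m n, ContinuousOn (fun z => Fs m z - Fs n z) G := fun m n =>
      ((hmem m).1.sub (hmem n).1).continuousOn
    have cauchy' : ∀ ε : ℝ, 0 < ε → ∃ N, ∀ m ≥ N, ∀ n ≥ N, ∀ z ∈ G,
        ‖Fs m z - Fs n z‖ ≤ ε * ‖F z‖ := by
      intro ε hε
      obtain ⟨N, hN⟩ := hcau ε hε
      exact ⟨N, fun m hm n hn => keyB G hG hGc F hF hFne _ (hdiffcont m n) ε hε.le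
        (fun z hz => hN m hm n hn z hz)⟩
    have ptcauchy : ∀ z ∈ G, CauchySeq (fun n => Fs n z) := by
      intro z hz
      rw [Metric.cauchySeq_iff]
      intro ε hε
      have hεpos : 0 < ε / (‖F z‖ + 1) := by positivity
      obtain ⟨N, hN⟩ := cauchy' _ hεpos
      refine ⟨N, fun m hm n hn => ?_⟩
      rw [Complex.dist_eq]
      calc ‖Fs m z - Fs n z‖ ≤ ε / (‖F z‖ + 1) * ‖F z‖ :=
            hN m hm n hn z hz
        _ < ε := by
            rw [div_mul_eq_mul_div, div_lt_iff₀ (by positivity)]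
            nlinarith [norm_nonneg (F z)]
    set f : ℂ → ℂ := fun z => limUnder atTop (fun n => Fs n z) with hfdef
    have htend : ∀ z ∈ G, Tendsto (fun n => Fs n z) atTop (𝓝 (f z)) := fun z hz =>
      (ptcauchy z hz).tendsto_limUnder
    have hTLU : TendstoLocallyUniformlyOn Fs f atTop G := by
      rw [tendstoLocallyUniformlyOn_iff_forall_isCompact hG]
      intro K hKG hK
      obtain ⟨M, hM⟩ := hK.exists_bound_of_continuousOn (hF.continuousOn.mono hKG)
      have hUC : UniformCauchySeqOn Fs atTop K := by
        rw [Metric.uniformCauchySeqOn_iff]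
        intro ε hε
        have hεpos : 0 < ε / (max M 0 + 1) := by positivity
        obtain ⟨N, hN⟩ := cauchy' _ hεpos
        refine ⟨N, fun m hm n hn z hz => ?_⟩
        rw [Complex.dist_eq]
        have h1 : ‖F z‖ ≤ max M 0 := le_trans (by
          simpa using hM z hz) (le_max_left _ _)
        calc ‖Fs m z - Fs n z‖ ≤ ε / (max M 0 + 1) * ‖F z‖ :=
              hN m hm n hn z (hKG hz)
          _ ≤ ε / (max M 0 + 1) * (max M 0) := by
              exact mul_le_mul_of_nonneg_left h1 hεpos.le
          _ < ε := by
              rw [div_mul_eq_mul_div, div_lt_iff₀ (by positivity)]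
              nlinarith [le_max_right M 0]
      exact hUC.tendstoUniformlyOn_of_tendsto (fun z hz => htend z (hKG hz))
    have hfd : DifferentiableOn ℂ f G :=
      hTLU.differentiableOn (Eventually.of_forall fun n => (hmem n).1) hG
    have hvtend : HvTendsto G v Fs f := by
      intro ε hε
      obtain ⟨N, hN⟩ := hcau ε hε
      refine ⟨N, fun n hn z hz => ?_⟩
      have hT : Tendsto (fun m => v z * ‖Fs n z - Fs m z‖) atTop
          (𝓝 (v z * ‖Fs n z - f z‖)) := by
        exact (continuous_const.mul (continuous_norm.comp
          (continuous_const.sub continuous_id))).continuousAt.tendsto.comp (htend z hz)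
      refine le_of_tendsto hT ?_
      filter_upwards [eventually_ge_atTop N] with m hm
      exact hN n hn m hm z hz
    refine ⟨f, ⟨hfd, ?_⟩, hvtend⟩
    · obtain ⟨N, hN⟩ := hvtend 1 one_pos
      obtain ⟨C, hC⟩ := (hmem N).2
      refine ⟨C + 1, fun z hz => ?_⟩
      calc v z * ‖f z‖
          ≤ v z * (‖Fs N z‖ + ‖Fs N z - f z‖) := by
            apply mul_le_mul_of_nonneg_left _ (hv0 z)
            calc ‖f z‖ = ‖Fs N z - (Fs N z - f z)‖ := by ring_nf
              _ ≤ _ := by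
                  simpa using norm_sub_le (Fs N z) (Fs N z - f z)
        _ = v z * ‖Fs N z‖ + v z * ‖Fs N z - f z‖ := by ring
        _ ≤ C + 1 := add_le_add (hC z hz) (hN N le_rfl z hz)
  · -- the equivalence
    intro f
    constructor
    · rintro ⟨hfd, C, hC⟩
      refine ⟨hfd, max C 1, lt_of_lt_of_le one_pos (le_max_right _ _), ?_⟩
      exact keyB G hG hGc F hF hFne f hfd.continuousOn (max C 1)
        (le_trans zero_le_one (le_max_right _ _))
        (fun z hz => le_trans (hC z hz) (le_max_left _ _))
    · rintro ⟨hfd, C, hCpos, hC⟩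
      refine ⟨hfd, C, fun z hz => ?_⟩
      by_cases h0 : F z = 0
      · simp only [hv, if_pos h0, zero_mul]; exact hCpos.le
      · simp only [hv, if_neg h0]
        rw [inv_mul_le_iff₀ (norm_pos_iff.mpr h0)]
        calc ‖f z‖ ≤ C * ‖F z‖ := hC z hz
          _ = ‖F z‖ * C := mul_comm _ _
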